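/- Let H be a monoid and x ∈ H with x ≠ 1_H. The two-element set {1_H, x} is an atom (irreducible element) of the reduced power monoid P_{fin,1}(H) if and only if x² ≠ 1_H and x² ≠ x. -/
import Mathlib


open Pointwise

theorem pair_atom_iff {H : Type*} [Monoid H] [DecidableEq H]
    (x : H) (hx : x ≠ 1) :
    (({(1 : H), x} : Finset H) ≠ {1} ∧
      ∀ Y Z : Finset H, (1 : H) ∈ Y → (1 : H) ∈ Z →
        ({(1 : H), x} : Finset H) = Y * Z → Y = {1} ∨ Z = {1}) ↔
    (x ^ 2 ≠ 1 ∧ x ^ 2 ≠ x) := by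
  constructor
  · rintro ⟨-, hatom⟩
    by_contra hcon
    have hsq : x ^ 2 = 1 ∨ x ^ 2 = x := by tauto
    have hmul : ({(1:H), x} : Finset H) = ({(1:H), x}) * ({(1:H), x}) := by
      ext a
      simp only [Finset.mem_mul, Finset.mem_insert, Finset.mem_singleton]
      constructor
      · rintro (rfl | rfl)
        · exact ⟨1, Or.inl rfl, 1, Or.inl rfl, by simp⟩
        · exact ⟨1, Or.inl rfl, a, Or.inr rfl, by simp⟩
      · rintro ⟨y, (rfl | rfl), z, (rfl | rfl), rfl⟩
        · simp
        · simp
        · simp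
        · rw [← pow_two]; exact hsq
    rcases hatom _ _ (by simp) (by simp) hmul with h | h <;>
    · have hxmem : x ∈ ({(1:H)} : Finset H) := h ▸ (by simp)
      exact hx (Finset.mem_singleton.mp hxmem)
  · rintro ⟨h1, h2⟩
    refine ⟨?_, ?_⟩
    · intro h
      have hxmem : x ∈ ({(1:H)} : Finset H) := h ▸ (by simp)
      exact hx (Finset.mem_singleton.mp hxmem)
    · intro Y Z hY hZ hYZ
      have hYsub : Y ⊆ ({(1:H), x} : Finset H) := by
        intro y hy
        rw [hYZ]
        simpa using Finset.mul_mem_mul hy hZ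
      have hZsub : Z ⊆ ({(1:H), x} : Finset H) := by
        intro z hz
        rw [hYZ]
        simpa using Finset.mul_mem_mul hY hz
      by_cases hxY : x ∈ Y
      · by_cases hxZ : x ∈ Z
        · exfalso
          have hxx : x * x ∈ ({(1:H), x} : Finset H) := by
            rw [hYZ]; exact Finset.mul_mem_mul hxY hxZ
          rw [← pow_two] at hxx
          simp only [Finset.mem_insert, Finset.mem_singleton] at hxx
          tauto
        · right
          apply Finset.Subset.antisymm
          · intro z hz
            rcases Finset.mem_insert.mp (hZsub hz) with h | h
            · simp [h]
            · exact absurd (Finset.mem_singleton.mp h ▸ hz) hxZ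
          · simpa using hZ
      · left
        apply Finset.Subset.antisymm
        · intro y hy
          rcases Finset.mem_insert.mp (hYsub hy) with h | h
          · simp [h]
          · exact absurd (Finset.mem_singleton.mp h ▸ hy) hxY
        · simpa using hY
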